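/- A finite graph G is acyclic if and only if for some (equivalently, every) traversal < of G, no vertex has two distinct neighbors that both precede it in <. -/

import Mathlib

open SimpleGraph

namespace AcyclicTraversalAux

variable {V : Type*}

/-- Within-prefix connectivity lemma for traversals. -/
lemma prefix_walk [Fintype V] [LinearOrder V] {G : SimpleGraph V}
    (hT : ∀ u v w : V, u < v → v < w → G.Adj u w → ∃ x : V, x < v ∧ G.Adj x v) :
    ∀ b x y : V, x < b → y < b → (∃ w, b ≤ w ∧ G.Adj x w) → (∃ w, b ≤ w ∧ G.Adj y w) →
      ∃ p : G.Walk x y, ∀ z ∈ p.support, z < b := by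
  intro b
  induction b using WellFoundedLT.induction with
  | _ b IH =>
    suffices H : ∀ x y : V, x < y → y < b → (∃ w, b ≤ w ∧ G.Adj x w) →
        (∃ w, b ≤ w ∧ G.Adj y w) → ∃ p : G.Walk x y, ∀ z ∈ p.support, z < b by
      intro x y hxb hyb hx hy
      rcases lt_trichotomy x y with h | rfl | h
      · exact H x y h hyb hx hy
      · exact ⟨Walk.nil, by simpa using hxb⟩
      · obtain ⟨p, hp⟩ := H y x h hxb hy hx
        exact ⟨p.reverse, by simpa [Walk.support_reverse] using hp⟩
    intro x y hxy hyb hx hy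
    obtain ⟨wx, hbwx, hax⟩ := hx
    obtain ⟨y', hy'y, hay'⟩ := hT x y wx hxy (lt_of_lt_of_le hyb hbwx) hax
    by_cases hx' : y' = x
    · subst hx'
      refine ⟨hay'.toWalk, ?_⟩
      intro z hz
      simp only [Adj.toWalk, Walk.support_cons, Walk.support_nil, List.mem_cons,
        List.mem_singleton, List.not_mem_nil, or_false] at hz
      rcases hz with rfl | rfl
      · exact lt_trans hxy hyb
      · exact hyb
    · obtain ⟨q, hq⟩ := IH y hyb x y' hxy hy'y
        ⟨wx, le_of_lt (lt_of_lt_of_le hyb hbwx), hax⟩ ⟨y, le_refl y, hay'⟩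
      refine ⟨q.append hay'.toWalk, ?_⟩
      intro z hz
      rw [Walk.support_append] at hz
      rcases List.mem_append.mp hz with h | h
      · exact lt_trans (hq z h) hyb
      · simp only [Adj.toWalk, Walk.support_cons, Walk.support_nil, List.tail_cons,
          List.mem_singleton] at h
        subst h
        exact hyb

lemma no_two_of_acyclic [Fintype V] [LinearOrder V] {G : SimpleGraph V}
    (hG : G.IsAcyclic)
    (hT : ∀ u v w : V, u < v → v < w → G.Adj u w → ∃ x : V, x < v ∧ G.Adj x v) :
    ¬ ∃ v x y : V, x ≠ y ∧ x < v ∧ y < v ∧ G.Adj x v ∧ G.Adj y v := by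
  rintro ⟨v, x, y, hxy, hxv, hyv, hax, hay⟩
  obtain ⟨p, hp⟩ := prefix_walk hT v x y hxv hyv ⟨v, le_refl v, hax⟩ ⟨v, le_refl v, hay⟩
  have hvp : v ∉ (p.toPath : G.Walk x y).support := fun h =>
    lt_irrefl v (hp v (Walk.support_toPath_subset p h))
  have hq : (Walk.cons hax (hay.symm.toWalk) : G.Walk x y).IsPath := by
    simp [Adj.toWalk, Walk.isPath_def, hax.ne, hay.ne', hxy]
  have huniq := isAcyclic_iff_path_unique.mp hG p.toPath ⟨_, hq⟩
  apply hvp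
  rw [huniq]
  simp [Adj.toWalk]

lemma acyclic_of_no_two [Fintype V] [LinearOrder V] {G : SimpleGraph V}
    (h : ¬ ∃ v x y : V, x ≠ y ∧ x < v ∧ y < v ∧ G.Adj x v ∧ G.Adj y v) :
    G.IsAcyclic := by
  classical
  intro a c hc
  have hne : c.support.toFinset.Nonempty := ⟨a, by simp⟩
  set v := c.support.toFinset.max' hne with hv
  have hvmem : v ∈ c.support := by
    have := c.support.toFinset.max'_mem hne
    simpa using this
  have hmax : ∀ z ∈ c.support, z ≤ v := fun z hz =>
    Finset.le_max' _ z (by simpa using hz)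
  have hcyc : (c.rotate v hvmem).IsCycle := hc.rotate hvmem
  have hsup : ∀ z ∈ (c.rotate v hvmem).support, z ∈ c.support := by
    intro z hz
    rw [Walk.support_eq_cons] at hz
    rcases List.mem_cons.mp hz with rfl | hz
    · exact hvmem
    · have := (Walk.support_rotate c v hvmem).mem_iff.mp hz
      exact List.mem_of_mem_tail this
  obtain ⟨u, hvu, p, hEq⟩ := Walk.not_nil_iff.mp hcyc.not_nil
  have hlen : 3 ≤ (c.rotate v hvmem).length := hcyc.three_le_length
  have hplen : 2 ≤ p.length := by
    rw [hEq] at hlen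
    simpa [Walk.length_cons] using hlen
  have hpnotnil : ¬ p.reverse.Nil := by
    rw [Walk.not_nil_iff_lt_length, Walk.length_reverse]
    omega
  obtain ⟨y, hvy, q, hEq2⟩ := Walk.not_nil_iff.mp hpnotnil
  -- u ≠ y
  have hedges : (Walk.cons hvu p).edges.Nodup := by
    rw [← hEq]
    exact hcyc.isCircuit.isTrail.edges_nodup
  have hmem_y : s(v, y) ∈ p.edges := by
    have : s(v, y) ∈ p.reverse.edges := by rw [hEq2]; simp
    rwa [Walk.edges_reverse, List.mem_reverse] at this
  have huy : u ≠ y := by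
    rintro rfl
    have := List.nodup_cons.mp (by simpa using hedges)
    exact this.1 hmem_y
  -- u, y ∈ support of rotated cycle
  have humem : u ∈ c.support := hsup u (by rw [hEq]; simp)
  have hymem : y ∈ c.support := by
    apply hsup
    rw [hEq]
    have : y ∈ p.support := by
      have : y ∈ p.reverse.support := by rw [hEq2]; simp
      rwa [Walk.support_reverse, List.mem_reverse] at this
    simp [this]
  have huv : u < v := lt_of_le_of_ne (hmax u humem) hvu.ne'
  have hyv : y < v := lt_of_le_of_ne (hmax y hymem) hvy.ne'
  exact h ⟨v, u, y, huy, huv, hyv, hvu.symm, hvy.symm⟩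

lemma exists_traversal [Fintype V] (G : SimpleGraph V) :
    ∃ L : LinearOrder V, ∀ u v w : V, L.lt u v → L.lt v w → G.Adj u w →
      ∃ x : V, L.lt x v ∧ G.Adj x v := by
  classical
  let e : V ≃ Fin (Fintype.card V) := Fintype.equivFin V
  let Rset : V → Finset V := fun v => Finset.univ.filter (fun u => G.Reachable u v)
  have hRmem : ∀ v, v ∈ Rset v := fun v =>
    Finset.mem_filter.mpr ⟨Finset.mem_univ v, Reachable.refl v⟩
  have hRcongr : ∀ {u v : V}, G.Reachable u v → Rset u = Rset v := by
    intro u v huv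
    ext w
    simp only [Rset, Finset.mem_filter, Finset.mem_univ, true_and]
    exact ⟨fun h => h.trans huv, fun h => h.trans huv.symm⟩
  let root : V → V := fun v =>
    e.symm (((Rset v).image e).min' ⟨e v, Finset.mem_image_of_mem e (hRmem v)⟩)
  have hroot_reach : ∀ v, G.Reachable (root v) v := by
    intro v
    have hmem := ((Rset v).image e).min'_mem ⟨e v, Finset.mem_image_of_mem e (hRmem v)⟩
    obtain ⟨u, hu, heu⟩ := Finset.mem_image.mp hmem
    have : u = root v := by
      simp only [root, ← heu, Equiv.symm_apply_apply]
    rw [← this]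
    simpa [Rset] using hu
  have hroot_congr : ∀ {u v : V}, G.Reachable u v → root u = root v := by
    intro u v huv
    simp only [root, hRcongr huv]
  let key : V → ℕ ×ₗ (ℕ ×ₗ ℕ) := fun v =>
    toLex ((e (root v) : ℕ), toLex ((G.dist (root v) v), (e v : ℕ)))
  have hinj : Function.Injective key := by
    intro a b hab
    have h3 : ((e a : ℕ)) = (e b : ℕ) := congrArg (fun z => (ofLex (ofLex z).2).2) hab
    exact e.injective (Fin.val_injective h3)
  refine ⟨LinearOrder.lift' key hinj, ?_⟩
  have hlt : ∀ a b : V, (LinearOrder.lift' key hinj).lt a b ↔ key a < key b := fun a b => Iff.rfl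
  intro u v w huv hvw hadj
  rw [hlt] at huv hvw
  -- first coordinates
  have hfst : ∀ {a b : V}, key a < key b → (e (root a) : ℕ) ≤ (e (root b) : ℕ) := by
    intro a b hab
    rcases Prod.Lex.lt_iff.mp hab with h | ⟨h, _⟩
    · exact le_of_lt h
    · exact le_of_eq h
  have hroot_uw : root u = root w := hroot_congr hadj.reachable
  have hroot_uv : root v = root u := by
    have h1 := hfst huv
    have h2 := hfst hvw
    rw [← hroot_uw] at h2
    exact e.injective (Fin.val_injective (le_antisymm h2 h1))
  have hkey_fst : (e (root u) : ℕ) = (e (root v) : ℕ) := by rw [hroot_uv]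
  rcases Nat.eq_zero_or_pos (G.dist (root v) v) with hd0 | hdpos
  · -- v is the root of its component; derive contradiction
    have hrv : root v = v := by
      rcases (G.dist_eq_zero_iff_eq_or_not_reachable).mp hd0 with h | h
      · exact h
      · exact absurd (hroot_reach v) h
    exfalso
    rcases Prod.Lex.lt_iff.mp huv with h | ⟨_, h⟩
    · have h' : (e (root u) : ℕ) < (e (root v) : ℕ) := h
      rw [hkey_fst] at h'
      exact lt_irrefl _ h'
    · rcases Prod.Lex.lt_iff.mp h with h' | ⟨h', _⟩
      · have h'' : G.dist (root u) u < G.dist (root v) v := h'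
        rw [hd0] at h''
        omega
      · have h'' : G.dist (root u) u = G.dist (root v) v := h'
        have hdu0 : G.dist (root u) u = 0 := by rw [h'', hd0]
        have hru : root u = u := by
          rcases (G.dist_eq_zero_iff_eq_or_not_reachable).mp hdu0 with h'' | h''
          · exact h''
          · exact absurd (hroot_reach u) h''
        have : u = v := by rw [← hru, hroot_uv.symm, hrv]
        subst this
        exact lt_irrefl _ huv
  · -- find a neighbor of v closer to the root
    obtain ⟨p, hplen⟩ := (hroot_reach v).exists_walk_length_eq_dist
    have hpnotnil : ¬ p.reverse.Nil := by
      rw [Walk.not_nil_iff_lt_length, Walk.length_reverse, hplen]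
      exact hdpos
    obtain ⟨x, hvx, q, hEq⟩ := Walk.not_nil_iff.mp hpnotnil
    have hqlen : q.length + 1 = G.dist (root v) v := by
      rw [← hplen, ← Walk.length_reverse p, hEq, Walk.length_cons]
    have hreach_x : G.Reachable x v := hvx.symm.reachable
    have hroot_x : root x = root v := hroot_congr hreach_x
    have hdist_x : G.dist (root v) x ≤ q.length := by
      have := G.dist_le q.reverse
      simpa using this
    refine ⟨x, ?_, hvx.symm⟩
    rw [hlt]
    apply Prod.Lex.lt_iff.mpr
    right
    constructor
    · simp [key, hroot_x]
    · apply Prod.Lex.lt_iff.mpr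
      left
      simp only [key, hroot_x, ofLex_toLex]
      omega

end AcyclicTraversalAux

/-- A finite graph is acyclic iff for every traversal no vertex has two
distinct prior neighbors, and also iff for some traversal no vertex has two
distinct prior neighbors. -/
theorem acyclic_iff_traversal {V : Type*} [Fintype V] (G : SimpleGraph V) :
    (G.IsAcyclic ↔
      ∀ L : LinearOrder V,
        (∀ u v w : V, L.lt u v → L.lt v w → G.Adj u w →
          ∃ x : V, L.lt x v ∧ G.Adj x v) →
        ¬ ∃ (v x y : V), x ≠ y ∧ L.lt x v ∧ L.lt y v ∧ G.Adj x v ∧ G.Adj y v) ∧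
    (G.IsAcyclic ↔
      ∃ L : LinearOrder V,
        (∀ u v w : V, L.lt u v → L.lt v w → G.Adj u w →
          ∃ x : V, L.lt x v ∧ G.Adj x v) ∧
        ¬ ∃ (v x y : V), x ≠ y ∧ L.lt x v ∧ L.lt y v ∧ G.Adj x v ∧ G.Adj y v) := by
  constructor
  · constructor
    · intro hG L hT
      letI := L
      exact AcyclicTraversalAux.no_two_of_acyclic hG hT
    · intro H
      obtain ⟨L, hT⟩ := AcyclicTraversalAux.exists_traversal G
      letI := L
      exact AcyclicTraversalAux.acyclic_of_no_two (H L hT)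
  · constructor
    · intro hG
      obtain ⟨L, hT⟩ := AcyclicTraversalAux.exists_traversal G
      letI := L
      exact ⟨L, hT, AcyclicTraversalAux.no_two_of_acyclic hG hT⟩
    · rintro ⟨L, hT, h⟩
      letI := L
      exact AcyclicTraversalAux.acyclic_of_no_two h
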